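/- Let L be a Lie ideal in the upper triangular matrix algebra Tₙ, let K = L ∩ Sₙ (strictly upper triangular part), and let f ∈ L ∩ Dₙ. If i < j and e_{ij} ∉ K but e_{ij} ∈ Tₙ has position (i,j) in the upper triangle, then f_{ii} = f_{jj}. -/

import Mathlib

/-- Let `L` be a Lie ideal in the upper triangular matrix algebra `Tₙ`,
`K = L ∩ Sₙ` its strictly upper triangular part, and `f ∈ L ∩ Dₙ` a diagonal element
of `L`.  If `i < j` and the matrix unit `e₍ᵢⱼ₎ ∉ K`, then `f ᵢᵢ = f ⱼⱼ`. -/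
theorem diagonal_part_constraint
    {n : ℕ} (L : Submodule ℂ (Matrix (Fin n) (Fin n) ℂ))
    (hLsub : ∀ x ∈ L, ∀ i j : Fin n, j < i → x i j = 0)
    (hLie : ∀ x ∈ L, ∀ a : Matrix (Fin n) (Fin n) ℂ,
      (∀ i j : Fin n, j < i → a i j = 0) → x * a - a * x ∈ L)
    (f : Matrix (Fin n) (Fin n) ℂ) (hfL : f ∈ L) (hfD : f.IsDiag)
    (i j : Fin n) (hij : i < j)
    (hij' : ¬ (Matrix.single i j (1 : ℂ) ∈ L ∧
      (∀ p q : Fin n, q ≤ p → Matrix.single i j (1 : ℂ) p q = 0))) :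
    f i i = f j j := by
  by_contra h
  set E := Matrix.single i j (1 : ℂ) with hE
  have hEup : ∀ p q : Fin n, q < p → E p q = 0 := by
    intro p q hpq
    rw [hE, Matrix.single]
    simp only [Matrix.of_apply]
    rw [if_neg]
    rintro ⟨rfl, rfl⟩
    exact absurd hij (not_lt.2 hpq.le)
  have hstrict : ∀ p q : Fin n, q ≤ p → E p q = 0 := by
    intro p q hpq
    rw [hE, Matrix.single]
    simp only [Matrix.of_apply]
    rw [if_neg]
    rintro ⟨rfl, rfl⟩
    exact absurd hij (not_lt.2 hpq)
  have key : f * E - E * f = (f i i - f j j) • E := by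
    have hd : Matrix.diagonal (fun k => f k k) = f := hfD.diagonal_diag
    rw [← hd]
    ext r s
    simp only [Matrix.sub_apply, Matrix.smul_apply, Matrix.diagonal_mul,
      Matrix.mul_diagonal, Matrix.diagonal_apply_eq, smul_eq_mul, hE,
      Matrix.single, Matrix.of_apply]
    clear hd hEup hstrict hij' hLie hLsub hfL h hij
    by_cases hr : r = i <;> by_cases hs : s = j <;>
      split_ifs with h1 <;>
      first
        | (obtain ⟨rfl, rfl⟩ := h1; ring)
        | (exact absurd h1.1.symm hr)
        | (exact absurd h1.2.symm hs)
        | (exact absurd h1.symm hr)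
        | (exact absurd h1.symm hs)
        | (subst hr; subst hs; exact absurd ⟨rfl, rfl⟩ h1)
        | (subst hr; exact absurd rfl h1)
        | (subst hs; exact absurd rfl h1)
        | ring
  have hmem : (f i i - f j j) • E ∈ L := key ▸ hLie f hfL E hEup
  have hc : (f i i - f j j) ≠ 0 := sub_ne_zero.2 h
  have hEL : E ∈ L := by
    have := L.smul_mem (f i i - f j j)⁻¹ hmem
    rwa [smul_smul, inv_mul_cancel₀ hc, one_smul] at this
  exact hij' ⟨hEL, hstrict⟩
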